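/- Let R be a ring and let h' : V₁' → V₁, f : V₁ → V₂, g : V₂ → V₃ be R-linear maps between R-modules such that f ∘ h' is injective, g is surjective, and range (f ∘ h') = ker g. Let π : V₁ → V₁ ⧸ range h' be the quotient map and let ī : V₁ ⧸ range h' → V₃ be the R-linear map induced by g ∘ f (which is well defined since (g ∘ f) ∘ h' = 0). Then the sequence 0 → V₁ → V₂ × (V₁ ⧸ range h') → V₃ → 0 is short exact, where the first map is v ↦ (f v, π v) and the second map is (w, c) ↦ g w − ī c; that is, v ↦ (f v, π v) is injective, (w, c) ↦ g w − ī c is surjective, and the range of the first map equals the kernel of the second. -/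

import Mathlib

theorem short_exact_prod_coker
    {R : Type*} [Ring R]
    {V₁' V₁ V₂ V₃ : Type*}
    [AddCommGroup V₁'] [Module R V₁']
    [AddCommGroup V₁] [Module R V₁]
    [AddCommGroup V₂] [Module R V₂]
    [AddCommGroup V₃] [Module R V₃]
    (h' : V₁' →ₗ[R] V₁) (f : V₁ →ₗ[R] V₂) (g : V₂ →ₗ[R] V₃)
    (hinj : Function.Injective (f ∘ₗ h')) (hsurj : Function.Surjective g)
    (hex : LinearMap.range (f ∘ₗ h') = LinearMap.ker g)
    (ibar : (V₁ ⧸ LinearMap.range h') →ₗ[R] V₃)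
    (hibar : ibar ∘ₗ (LinearMap.range h').mkQ = g ∘ₗ f) :
    Function.Injective (LinearMap.prod f (LinearMap.range h').mkQ) ∧
    Function.Surjective
      (g ∘ₗ LinearMap.fst R V₂ (V₁ ⧸ LinearMap.range h') -
        ibar ∘ₗ LinearMap.snd R V₂ (V₁ ⧸ LinearMap.range h')) ∧
    LinearMap.range (LinearMap.prod f (LinearMap.range h').mkQ) =
      LinearMap.ker
        (g ∘ₗ LinearMap.fst R V₂ (V₁ ⧸ LinearMap.range h') -
          ibar ∘ₗ LinearMap.snd R V₂ (V₁ ⧸ LinearMap.range h')) := by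
  have hibar' : ∀ v : V₁, ibar ((LinearMap.range h').mkQ v) = g (f v) := fun v =>
    congrArg (fun t : V₁ →ₗ[R] V₃ => t v) hibar
  refine ⟨?_, ?_, ?_⟩
  · intro v w hvw
    have h1 : f v = f w := congrArg Prod.fst hvw
    have h2 : (LinearMap.range h').mkQ v = (LinearMap.range h').mkQ w :=
      congrArg Prod.snd hvw
    have : v - w ∈ LinearMap.range h' := (Submodule.Quotient.eq _).mp h2
    obtain ⟨x, hx⟩ := this
    have : (f ∘ₗ h') x = 0 := by
      simp [LinearMap.comp_apply, hx, h1]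
    have := hinj (by simpa using this : (f ∘ₗ h') x = (f ∘ₗ h') 0)
    rw [this, map_zero] at hx
    exact sub_eq_zero.mp hx.symm
  · intro w₃
    obtain ⟨w, hw⟩ := hsurj w₃
    exact ⟨(w, 0), by simp [hw]⟩
  · ext ⟨w, c⟩
    simp only [LinearMap.mem_range, LinearMap.mem_ker, LinearMap.prod_apply,
      LinearMap.sub_apply, LinearMap.comp_apply, LinearMap.fst_apply,
      LinearMap.snd_apply, Function.prod, Prod.mk.injEq]
    constructor
    · rintro ⟨v, hv1, hv2⟩
      rw [← hv1, ← hv2, hibar', sub_self]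
    · intro hwc
      obtain ⟨v, hv⟩ := (LinearMap.range h').mkQ_surjective c
      have hg : g (w - f v) = 0 := by
        have := hibar' v
        rw [hv] at this
        rw [map_sub, sub_eq_zero] at *
        rw [← this, hwc]
      obtain ⟨x, hx⟩ : w - f v ∈ LinearMap.range (f ∘ₗ h') := hex ▸ hg
      refine ⟨v + h' x, ?_, ?_⟩
      · rw [map_add]
        have : f (h' x) = w - f v := hx
        rw [this]; abel
      · rw [map_add, hv]
        have : (LinearMap.range h').mkQ (h' x) = 0 := by
          simp [Submodule.Quotient.mk_eq_zero]
        rw [this, add_zero]
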